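/- If F(x,y) is a squarefree binary quartic form over an algebraically closed field of characteristic 0, then F and its Hessian H_F = (F_xx F_yy - F_xy^2)/144 share no common nonconstant factor. Equivalently: if a linear form L divides both F and H_F, then L^2 divides F. -/

import Mathlib

open MvPolynomial

private lemma prime_X0 {K : Type*} [Field K] :
    Prime (X 0 : MvPolynomial (Fin 2) K) := by
  rw [← MulEquiv.prime_iff (finSuccEquiv K 1).toMulEquiv]
  simpa [finSuccEquiv_X_zero] using Polynomial.prime_X (R := MvPolynomial (Fin 1) K)

private lemma exists_zero {K : Type*} [Field K] [IsAlgClosed K]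
    (p : MvPolynomial (Fin 2) K) (hp : ¬ IsUnit p) : ∃ v : Fin 2 → K, eval v p = 0 := by
  have hspan : Ideal.span {p} ≠ ⊤ := by
    rw [Ne, Ideal.span_singleton_eq_top]; exact hp
  obtain ⟨m, hm, hle⟩ := Ideal.exists_le_maximal _ hspan
  obtain ⟨x, hx⟩ := (MvPolynomial.isMaximal_iff_eq_vanishingIdeal_singleton (I := m)).mp hm
  refine ⟨x, ?_⟩
  have hpm : p ∈ m := hle (Ideal.subset_span rfl)
  rw [hx] at hpm
  exact (MvPolynomial.mem_vanishingIdeal_singleton_iff x p).mp hpm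

private lemma exists_zero_ne {K : Type*} [Field K] [IsAlgClosed K]
    (p : MvPolynomial (Fin 2) K) (hp : ¬ IsUnit p) :
    ∃ v : Fin 2 → K, eval v p = 0 ∧ v ≠ 0 := by
  by_cases h0 : p = 0
  · exact ⟨fun _ => 1, by simp [h0], fun h => by simpa using congrFun h 0⟩
  by_contra hcon
  push_neg at hcon
  have hrad : ∀ i : Fin 2, (X i : MvPolynomial (Fin 2) K) ∈ (Ideal.span {p}).radical := by
    intro i
    rw [← MvPolynomial.vanishingIdeal_zeroLocus_eq_radical (k := K) (K := K),
      MvPolynomial.mem_vanishingIdeal_iff]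
    intro x hx
    have hx' : eval x p = 0 :=
      (MvPolynomial.mem_zeroLocus_iff.mp hx) p (Ideal.subset_span rfl)
    have := hcon x hx'
    simp [this]
  obtain ⟨n0, hn0⟩ := Ideal.mem_radical_iff.mp (hrad 0)
  obtain ⟨n1, hn1⟩ := Ideal.mem_radical_iff.mp (hrad 1)
  have hd0 : p ∣ (X 0 : MvPolynomial (Fin 2) K) ^ n0 := Ideal.mem_span_singleton.mp hn0
  have hd1 : p ∣ (X 1 : MvPolynomial (Fin 2) K) ^ n1 := Ideal.mem_span_singleton.mp hn1
  obtain ⟨q, hqirr, hqp⟩ := WfDvdMonoid.exists_irreducible_factor hp h0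
  have hqprime : Prime q := (UniqueFactorizationMonoid.irreducible_iff_prime).mp hqirr
  have hq0 : q ∣ (X 0 : MvPolynomial (Fin 2) K) :=
    hqprime.dvd_of_dvd_pow (hqp.trans hd0)
  have hq1 : q ∣ (X 1 : MvPolynomial (Fin 2) K) :=
    hqprime.dvd_of_dvd_pow (hqp.trans hd1)
  obtain ⟨u, hu⟩ := hq0
  rcases (prime_X0 (K := K)).irreducible.isUnit_or_isUnit hu with h | h
  · exact hqirr.not_isUnit h
  · obtain ⟨w, hw⟩ : (X 0 : MvPolynomial (Fin 2) K) ∣ X 1 := by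
      refine dvd_trans ?_ hq1
      obtain ⟨uu, huu⟩ := h
      exact ⟨(uu⁻¹ : _), by rw [hu, ← huu]; exact (Units.mul_inv_cancel_right q uu).symm⟩
    have := congrArg (eval (fun i : Fin 2 => if i = 1 then (1:K) else 0)) hw
    simp at this

set_option maxHeartbeats 3000000 in
/-- If `F` is a squarefree binary quartic over an algebraically closed field of
characteristic zero, then `F` and its Hessian `H_F` share no common nonconstant factor. -/
theorem squarefree_quartic_coprime_hessian (K : Type*) [Field K] [IsAlgClosed K]
    [CharZero K] (a b c d e : K) :
    let x : MvPolynomial (Fin 2) K := X 0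
    let y : MvPolynomial (Fin 2) K := X 1
    let F : MvPolynomial (Fin 2) K :=
      C a * x ^ 4 + 4 * C b * x ^ 3 * y + 6 * C c * x ^ 2 * y ^ 2 +
        4 * C d * x * y ^ 3 + C e * y ^ 4
    let H : MvPolynomial (Fin 2) K :=
      C ((144 : K)⁻¹) *
        (pderiv 0 (pderiv 0 F) * pderiv 1 (pderiv 1 F) - (pderiv 1 (pderiv 0 F)) ^ 2)
    Squarefree F → ∀ p : MvPolynomial (Fin 2) K, p ∣ F → p ∣ H → IsUnit p := by
  intro x y F H hsq p hpF hpH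
  by_contra hp
  have hFdef : F = C a * X 0 ^ 4 + 4 * C b * X 0 ^ 3 * X 1 + 6 * C c * X 0 ^ 2 * X 1 ^ 2 +
      4 * C d * X 0 * X 1 ^ 3 + C e * X 1 ^ 4 := rfl
  have hF' : F = C a * (X 0 * X 0 * X 0 * X 0) + C (4*b) * (X 0 * X 0 * X 0) * X 1
      + C (6*c) * (X 0 * X 0) * (X 1 * X 1) + C (4*d) * X 0 * (X 1 * X 1 * X 1)
      + C e * (X 1 * X 1 * X 1 * X 1) := by
    rw [hFdef]; simp only [map_mul, map_ofNat]; ring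
  have hHdef : H = C ((144 : K)⁻¹) *
      (pderiv 0 (pderiv 0 F) * pderiv 1 (pderiv 1 F) - (pderiv 1 (pderiv 0 F)) ^ 2) := rfl
  obtain ⟨v, hvp, hv0⟩ := exists_zero_ne p hp
  have hF0 : eval v F = 0 := by
    obtain ⟨m, hm⟩ := hpF; rw [hm, map_mul, hvp, zero_mul]
  have hH0 : eval v H = 0 := by
    obtain ⟨m, hm⟩ := hpH; rw [hm, map_mul, hvp, zero_mul]
  have hfh : a * v 0 ^ 4 + 4 * b * v 0 ^ 3 * v 1 + 6 * c * v 0 ^ 2 * v 1 ^ 2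
      + 4 * d * v 0 * v 1 ^ 3 + e * v 1 ^ 4 = 0 := by
    rw [← hF0, hF']; simp; ring
  have hDval : eval v (pderiv 0 (pderiv 0 F) * pderiv 1 (pderiv 1 F)
      - (pderiv 1 (pderiv 0 F)) ^ 2) = 144 *
      ((a * v 0 ^ 2 + 2 * b * v 0 * v 1 + c * v 1 ^ 2) *
        (c * v 0 ^ 2 + 2 * d * v 0 * v 1 + e * v 1 ^ 2) -
       (b * v 0 ^ 2 + 2 * c * v 0 * v 1 + d * v 1 ^ 2) ^ 2) := by
    rw [hF']
    simp [pderiv_mul]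
    ring
  have he2 : (a * v 0 ^ 2 + 2 * b * v 0 * v 1 + c * v 1 ^ 2) *
        (c * v 0 ^ 2 + 2 * d * v 0 * v 1 + e * v 1 ^ 2) -
       (b * v 0 ^ 2 + 2 * c * v 0 * v 1 + d * v 1 ^ 2) ^ 2 = 0 := by
    have h144 : ((144:K)⁻¹) ≠ 0 := inv_ne_zero (by norm_num)
    have hD0 : eval v (pderiv 0 (pderiv 0 F) * pderiv 1 (pderiv 1 F)
        - (pderiv 1 (pderiv 0 F)) ^ 2) = 0 := by
      have h := hH0
      rw [hHdef, map_mul, eval_C] at h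
      exact (mul_eq_zero.mp h).resolve_left h144
    rw [hDval] at hD0
    exact (mul_eq_zero.mp hD0).resolve_left (by norm_num)
  by_cases hb : v 1 = 0
  · -- case β = 0 : then α ≠ 0, and a = b = 0, so y² ∣ F
    have hα : v 0 ≠ 0 := by
      intro h
      apply hv0
      funext i
      fin_cases i <;> simp [h, hb]
    have ha : a = 0 := by
      have := hfh
      rw [hb] at this
      simpa [pow_eq_zero_iff, hα] using this
    have hbz : b = 0 := by
      have := he2
      rw [hb, ha] at this
      simp at this
      rcases this with h | h
      · exact h
      · exact absurd h hα
    have hyF : X 1 * X 1 ∣ F := by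
      refine ⟨6 * C c * X 0 ^ 2 + 4 * C d * X 0 * X 1 + C e * X 1 ^ 2, ?_⟩
      rw [hFdef, ha, hbz]
      simp only [map_zero]
      ring
    have hyu : IsUnit (X 1 : MvPolynomial (Fin 2) K) := hsq _ hyF
    have := hyu.map (eval (fun _ : Fin 2 => (0:K)))
    simp at this
  · -- case β ≠ 0
    have hgh : a * v 0 ^ 3 + 3 * b * v 0 ^ 2 * v 1 + 3 * c * v 0 * v 1 ^ 2 + d * v 1 ^ 3 = 0 := by
      have hsq2 : (a * v 0 ^ 3 + 3 * b * v 0 ^ 2 * v 1 + 3 * c * v 0 * v 1 ^ 2 + d * v 1 ^ 3) ^ 2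
          = 0 := by
        linear_combination (a * v 0 ^ 2 + 2 * b * v 0 * v 1 + c * v 1 ^ 2) * hfh
          - v 1 ^ 2 * he2
      exact sq_eq_zero_iff.mp (by rw [sq]; rw [sq] at hsq2; exact hsq2)
    have key : C (v 1) ^ 4 * F =
        (C (v 1) * X 0 - C (v 0) * X 1) ^ 2 *
          (C (a * v 1 ^ 2) * X 0 ^ 2 + C (2 * a * v 0 * v 1 + 4 * b * v 1 ^ 2) * X 0 * X 1
            + C (3 * a * v 0 ^ 2 + 8 * b * v 0 * v 1 + 6 * c * v 1 ^ 2) * X 1 ^ 2)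
        + C (4 * (a * v 0 ^ 3 + 3 * b * v 0 ^ 2 * v 1 + 3 * c * v 0 * v 1 ^ 2 + d * v 1 ^ 3))
            * X 1 ^ 3 * (C (v 1) * X 0 - C (v 0) * X 1)
        + C (a * v 0 ^ 4 + 4 * b * v 0 ^ 3 * v 1 + 6 * c * v 0 ^ 2 * v 1 ^ 2
            + 4 * d * v 0 * v 1 ^ 3 + e * v 1 ^ 4) * X 1 ^ 4 := by
      rw [hFdef]
      simp only [map_mul, map_add, map_pow, map_ofNat]
      ring
    rw [hgh, hfh] at key
    simp only [mul_zero, map_zero, zero_mul, add_zero] at key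
    have hLsq : (C (v 1) * X 0 - C (v 0) * X 1) * (C (v 1) * X 0 - C (v 0) * X 1) ∣ F := by
      have hc : (C ((v 1 ^ 4)⁻¹) : MvPolynomial (Fin 2) K) * C (v 1) ^ 4 = 1 := by
        rw [← map_pow, ← map_mul, inv_mul_cancel₀ (pow_ne_zero 4 hb), map_one]
      refine ⟨C ((v 1 ^ 4)⁻¹) *
        (C (a * v 1 ^ 2) * X 0 ^ 2 + C (2 * a * v 0 * v 1 + 4 * b * v 1 ^ 2) * X 0 * X 1
          + C (3 * a * v 0 ^ 2 + 8 * b * v 0 * v 1 + 6 * c * v 1 ^ 2) * X 1 ^ 2), ?_⟩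
      calc F = (C ((v 1 ^ 4)⁻¹) * C (v 1) ^ 4) * F := by rw [hc, one_mul]
        _ = C ((v 1 ^ 4)⁻¹) * (C (v 1) ^ 4 * F) := by ring
        _ = _ := by rw [key]; ring
    have hLu : IsUnit (C (v 1) * X 0 - C (v 0) * X 1 : MvPolynomial (Fin 2) K) := hsq _ hLsq
    have hLev : eval v (C (v 1) * X 0 - C (v 0) * X 1 : MvPolynomial (Fin 2) K) = 0 := by
      simp [mul_comm]
    exact (hLu.map (eval v)).ne_zero hLev
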